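/- For every positive integer n not divisible by 3, the (3,n)-rational q,t-Catalan polynomial satisfies C_{3,n}(q,t) = Σ_{s=0}^{⌊n/3⌋} Σ_{a=s}^{n-2s-1} q^{n-a-s-1} t^{a}; equivalently, C_{3,n}(q,t) = Σ_{s=0}^{⌊n/3⌋} Σ_{(a,d) : a ≥ s, d ≥ s, a+s+d+1=n} q^{d} t^{a}. -/

import Mathlib

open MvPolynomial

/-- An `(m,n)`-Dyck path: a north/east lattice path from `(0,0)` to `(m,n)` staying
weakly above the diagonal `y = (n/m)x`.  Such a path is encoded by recording, for each
of the `m` columns (indexed `0,…,m-1` from left to right), the number of cells of that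
column lying above the path; this gives an antitone sequence, and the diagonal
condition for the east step in column `i` reads `m * c i ≤ n * (m - 1 - i)`. -/
def DyckPath (m n : ℕ) : Type :=
  {c : Fin m → Fin (n + 1) //
    (∀ i j : Fin m, i ≤ j → (c j : ℕ) ≤ (c i : ℕ)) ∧
      ∀ i : Fin m, m * (c i : ℕ) ≤ n * (m - 1 - (i : ℕ))}

noncomputable instance instFintypeDyckPath (m n : ℕ) : Fintype (DyckPath m n) := by
  classical
  unfold DyckPath
  infer_instance

namespace DyckPath

variable {m n : ℕ}

/-- `λ(Π)`, the set of cells of the `m × n` lattice lying above the path `Π`.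
The cell `(i, j)` (with `i : Fin m`, `j : Fin n`) is the cell in column `i + 1`
(from the left) and row `j + 1` (from the bottom) in the paper's 1-based indexing. -/
def cellsAbove (P : DyckPath m n) : Set (Fin m × Fin n) :=
  {x | n - (P.1 x.1 : ℕ) ≤ (x.2 : ℕ)}

/-- `arm(x)`: the number of cells of `λ(Π)` strictly east of `x` (in the row of `x`). -/
noncomputable def arm (P : DyckPath m n) (x : Fin m × Fin n) : ℕ :=
  {y ∈ P.cellsAbove | x.1 < y.1 ∧ y.2 = x.2}.ncard

/-- `leg(x)`: the number of cells of `λ(Π)` strictly south of `x` (in the column of `x`). -/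
noncomputable def leg (P : DyckPath m n) (x : Fin m × Fin n) : ℕ :=
  {y ∈ P.cellsAbove | y.1 = x.1 ∧ y.2 < x.2}.ncard

end DyckPath

/-- The dinv condition `arm/(leg+1) < m/n < (arm+1)/leg` for a cell with given arm `a`
and leg `l`, the right inequality being interpreted as true when `l = 0`. -/
def dinvCond (m n a l : ℕ) : Prop :=
  (a : ℚ) / ((l : ℚ) + 1) < (m : ℚ) / (n : ℚ) ∧
    (l = 0 ∨ (m : ℚ) / (n : ℚ) < ((a : ℚ) + 1) / (l : ℚ))

namespace DyckPath

variable {m n : ℕ}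

/-- `dinv(Π)`: the number of cells `x ∈ λ(Π)` with
`arm(x)/(leg(x)+1) < m/n < (arm(x)+1)/leg(x)`. -/
noncomputable def dinv (P : DyckPath m n) : ℕ :=
  {x ∈ P.cellsAbove | dinvCond m n (P.arm x) (P.leg x)}.ncard

/-- `area(Π)`: the number of cells of the lattice lying entirely between the path and
the diagonal, i.e. cells lying entirely weakly above the diagonal `y = (n/m)x` and
below the path. -/
noncomputable def area (P : DyckPath m n) : ℕ :=
  {x : Fin m × Fin n | n * ((x.1 : ℕ) + 1) ≤ m * (x.2 : ℕ) ∧ x ∉ P.cellsAbove}.ncard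

end DyckPath

/-- The `(m,n)`-rational `q,t`-Catalan polynomial `C_{m,n}(q,t)`, with `q = X 0` and
`t = X 1`:  `C_{m,n}(q,t) = Σ_Π q^{dinv(Π)} t^{area(Π)}` over all `(m,n)`-Dyck paths. -/
noncomputable def ratCatalan (m n : ℕ) : MvPolynomial (Fin 2) ℤ :=
  ∑ P : DyckPath m n, X 0 ^ P.dinv * X 1 ^ P.area

/-- The rank of the cell `(i, j)` of the `3 × n` lattice: in the paper's 1-based
coordinates `(a, b) = (i+1, j+1)`, this is `R(a,b) = -a·n + 3(b-1)`. -/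
def cellRank (n : ℕ) (x : Fin 3 × Fin n) : ℤ :=
  3 * (x.2 : ℤ) - ((x.1 : ℤ) + 1) * (n : ℤ)

/-- The set of positive ranks of the `3 × n` lattice: these, in increasing order, are
the entries of the rank word. -/
def posRank (n : ℕ) : Set ℤ :=
  {r | 0 < r ∧ ∃ x : Fin 3 × Fin n, cellRank n x = r}

/-- The set of marked ranks of a `(3,n)`-Dyck path: the ranks of the cells above
the path. -/
def markedRank {n : ℕ} (P : DyckPath 3 n) : Set ℤ :=
  cellRank n '' P.cellsAbove

/-- `skips(Π)`: the number of skips of `Π`, i.e. of maximal blocks of consecutive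
unmarked entries of the rank word of `Π` having at least one marked entry to the left
and at least one marked entry to the right.  Each such block is counted through its
rightmost entry `r`: `r` is an unmarked entry, some marked entry lies to its left, and
the next entry of the rank word after `r` is marked. -/
noncomputable def DyckPath.skips {n : ℕ} (P : DyckPath 3 n) : ℕ :=
  {r : ℤ | r ∈ posRank n ∧ r ∉ markedRank P ∧
    (∃ l ∈ markedRank P, l < r) ∧
    ∃ s ∈ markedRank P, r < s ∧ ∀ t ∈ posRank n, r < t → s ≤ t}.ncard


namespace RatCat3
open Finset

lemma fin_filter_card {n : ℕ} (q : ℕ → Prop) [DecidablePred q] :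
    (Finset.univ.filter (fun j : Fin n => q j.val)).card = ((Finset.range n).filter q).card := by
  apply Finset.card_bij (fun j _ => j.val)
  · intro a ha
    simp only [mem_filter, mem_univ, true_and] at ha
    simp [a.isLt, ha]
  · intro a _ b _ h; exact Fin.val_injective h
  · intro b hb
    simp only [mem_filter, mem_range] at hb
    exact ⟨⟨b, hb.1⟩, by simp [hb.2], rfl⟩

lemma ncard_fin {n : ℕ} (q : ℕ → Prop) [DecidablePred q] :
    {j : Fin n | q j.val}.ncard = ((Finset.range n).filter q).card := by
  classical
  rw [Set.ncard_eq_toFinset_card', Set.toFinset_setOf, fin_filter_card]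

lemma fiber_card {n : ℕ} (p : Fin 3 × Fin n → Prop) [DecidablePred p] (i : Fin 3) :
    ((Finset.univ.filter p).filter (fun x => x.1 = i)).card
      = (Finset.univ.filter (fun j : Fin n => p (i, j))).card := by
  apply Finset.card_bij (fun x _ => x.2)
  · intro a ha
    simp only [mem_filter, mem_univ, true_and] at ha ⊢
    rw [← ha.2]; exact ha.1
  · intro a ha b hb h
    simp only [mem_filter] at ha hb
    exact Prod.ext (ha.2.trans hb.2.symm) h
  · intro b hb
    simp only [mem_filter, mem_univ, true_and] at hb
    exact ⟨(i, b), by simp [hb], rfl⟩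

lemma ncard_fin' {n : ℕ} (q : Fin n → Prop) [DecidablePred q] :
    {j : Fin n | q j}.ncard = (Finset.univ.filter q).card := by
  rw [Set.ncard_eq_toFinset_card', Set.toFinset_setOf]

lemma ncard_prod {n : ℕ} (p : Fin 3 × Fin n → Prop) [DecidablePred p] :
    {x : Fin 3 × Fin n | p x}.ncard =
      {j : Fin n | p (0, j)}.ncard + {j : Fin n | p (1, j)}.ncard
        + {j : Fin n | p (2, j)}.ncard := by
  classical
  rw [Set.ncard_eq_toFinset_card', Set.toFinset_setOf]
  rw [Finset.card_eq_sum_card_fiberwise (f := Prod.fst) (t := Finset.univ) (fun x _ => mem_univ _)]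
  rw [Fin.sum_univ_three, fiber_card, fiber_card, fiber_card, ncard_fin', ncard_fin', ncard_fin']

lemma ncard_eq_card {n : ℕ} {S : Set (Fin n)} (q : ℕ → Prop) [DecidablePred q]
    (h : ∀ j : Fin n, j ∈ S ↔ q j.val) (F : Finset ℕ)
    (hF : ∀ t : ℕ, t ∈ F ↔ (t < n ∧ q t)) : S.ncard = F.card := by
  have hS : S = {j : Fin n | q j.val} := Set.ext h
  rw [hS, ncard_fin]
  congr 1
  ext t
  simp only [mem_filter, mem_range, hF t]

variable {n : ℕ}

lemma c2_zero (P : DyckPath 3 n) : (P.1 2 : ℕ) = 0 := by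
  have h := P.2.2 2
  have e : (3 - 1 - ((2 : Fin 3) : ℕ)) = 0 := by decide
  rw [e, mul_zero] at h
  omega

lemma c1_le_c0 (P : DyckPath 3 n) : (P.1 1 : ℕ) ≤ (P.1 0 : ℕ) := P.2.1 0 1 (by decide)

lemma c0_bound (P : DyckPath 3 n) : 3 * (P.1 0 : ℕ) ≤ 2 * n := by
  have h := P.2.2 0
  norm_num at h
  omega

lemma c1_bound (P : DyckPath 3 n) : 3 * (P.1 1 : ℕ) ≤ n := by
  have h := P.2.2 1
  norm_num at h
  omega

lemma c0_le (P : DyckPath 3 n) : (P.1 0 : ℕ) ≤ n := by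
  have := (P.1 0).isLt
  omega

lemma dinvCond_iff {a l : ℕ} (hn : 0 < n) :
    dinvCond 3 n a l ↔ (n * a < 3 * (l + 1) ∧ (l = 0 ∨ 3 * l < n * (a + 1))) := by
  have hn' : (0:ℚ) < (n:ℚ) := by exact_mod_cast hn
  unfold dinvCond
  have e1 : (a:ℚ)/((l:ℚ)+1) < ((3:ℕ):ℚ)/(n:ℚ) ↔ n * a < 3 * (l+1) := by
    rw [div_lt_div_iff₀ (by positivity) hn', ← Nat.cast_lt (α := ℚ)]
    push_cast
    constructor <;> intro h <;> linarith
  have e2 : ∀ _ : 0 < l, (((3:ℕ):ℚ)/(n:ℚ) < ((a:ℚ)+1)/(l:ℚ) ↔ 3 * l < n * (a+1)) := by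
    intro hl
    rw [div_lt_div_iff₀ hn' (by exact_mod_cast hl), ← Nat.cast_lt (α := ℚ)]
    push_cast
    constructor <;> intro h <;> linarith
  constructor
  · rintro ⟨h1, h2⟩
    refine ⟨e1.mp h1, ?_⟩
    rcases h2 with h | h
    · exact Or.inl h
    · rcases Nat.eq_zero_or_pos l with hl | hl
      · exact Or.inl hl
      · exact Or.inr ((e2 hl).mp h)
  · rintro ⟨h1, h2⟩
    refine ⟨e1.mpr h1, ?_⟩
    rcases h2 with h | h
    · exact Or.inl h
    · rcases Nat.eq_zero_or_pos l with hl | hl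
      · exact Or.inl hl
      · exact Or.inr ((e2 hl).mpr h)

lemma leg_eq (P : DyckPath 3 n) (i : Fin 3) (j : Fin n) :
    P.leg (i, j) = (j : ℕ) - (n - (P.1 i : ℕ)) := by
  classical
  unfold DyckPath.leg
  have himg : {y : Fin 3 × Fin n | y ∈ P.cellsAbove ∧ y.1 = (i, j).1 ∧ y.2 < (i, j).2}
      = (fun j' : Fin n => (i, j')) '' {j' : Fin n | n - (P.1 i : ℕ) ≤ (j' : ℕ) ∧ (j' : ℕ) < (j : ℕ)} := by
    ext ⟨y1, y2⟩
    simp only [Set.mem_setOf_eq, Set.mem_image, DyckPath.cellsAbove, Prod.mk.injEq]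
    constructor
    · rintro ⟨h1, h2, h3⟩
      exact ⟨y2, ⟨by rw [← h2]; exact h1, h3⟩, h2.symm, rfl⟩
    · rintro ⟨j', ⟨hj1, hj2⟩, hi, hj⟩
      subst hi; subst hj
      exact ⟨hj1, rfl, hj2⟩
  rw [himg, Set.ncard_image_of_injective _ (fun a b h => (Prod.mk.injEq _ _ _ _ ▸ h).2)]
  rw [ncard_eq_card (S := {j' : Fin n | n - (P.1 i : ℕ) ≤ (j' : ℕ) ∧ (j' : ℕ) < (j : ℕ)})
    (fun t => n - (P.1 i : ℕ) ≤ t ∧ t < (j : ℕ))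
    (fun j' => Iff.rfl) (Finset.Ico (n - (P.1 i : ℕ)) (j : ℕ))
    (fun t => by simp only [mem_Ico]; have := j.isLt; omega), Nat.card_Ico]

lemma arm_one (P : DyckPath 3 n) (j : Fin n) : P.arm (1, j) = 0 := by
  classical
  unfold DyckPath.arm
  have : {y : Fin 3 × Fin n | y ∈ P.cellsAbove ∧ (1, j).1 < y.1 ∧ y.2 = (1, j).2} = ∅ := by
    ext ⟨y1, y2⟩
    simp only [Set.mem_setOf_eq, Set.mem_empty_iff_false, iff_false, not_and,
      DyckPath.cellsAbove]
    intro h1 h2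
    fin_cases y1
    · exact absurd h2 (by decide)
    · exact absurd h2 (by decide)
    · intro h3
      have hc2 : (P.1 (2 : Fin 3) : ℕ) = 0 := c2_zero P
      have hy2 := y2.isLt
      have h1' : n - (P.1 (2 : Fin 3) : ℕ) ≤ (y2 : ℕ) := h1
      omega
  rw [this, Set.ncard_empty]

lemma arm_zero (P : DyckPath 3 n) (j : Fin n) :
    P.arm (0, j) = if n - (P.1 1 : ℕ) ≤ (j : ℕ) then 1 else 0 := by
  classical
  unfold DyckPath.arm
  by_cases hc : n - (P.1 1 : ℕ) ≤ (j : ℕ)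
  · rw [if_pos hc]
    have hset : {y : Fin 3 × Fin n | y ∈ P.cellsAbove ∧ (0, j).1 < y.1 ∧ y.2 = (0, j).2}
        = {((1 : Fin 3), j)} := by
      ext ⟨y1, y2⟩
      simp only [Set.mem_setOf_eq, Set.mem_singleton_iff, DyckPath.cellsAbove,
        Prod.mk.injEq]
      constructor
      · rintro ⟨h1, h2, h3⟩
        fin_cases y1
        · exact absurd h2 (by decide)
        · exact ⟨rfl, h3⟩
        · have hc2 : (P.1 (2 : Fin 3) : ℕ) = 0 := c2_zero P
          have h1' : n - (P.1 (2 : Fin 3) : ℕ) ≤ (y2 : ℕ) := h1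
          have hy2 := y2.isLt
          omega
      · rintro ⟨h1, h2⟩
        subst h1; subst h2
        exact ⟨hc, by decide, rfl⟩
    rw [hset, Set.ncard_singleton]
  · rw [if_neg hc]
    have hset : {y : Fin 3 × Fin n | y ∈ P.cellsAbove ∧ (0, j).1 < y.1 ∧ y.2 = (0, j).2}
        = ∅ := by
      ext ⟨y1, y2⟩
      simp only [Set.mem_setOf_eq, Set.mem_empty_iff_false, iff_false, not_and,
        DyckPath.cellsAbove]
      intro h1 h2 h3
      fin_cases y1
      · exact absurd h2 (by decide)
      · have h1' : n - (P.1 (1 : Fin 3) : ℕ) ≤ (y2 : ℕ) := h1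
        have h3' : (y2 : ℕ) = (j : ℕ) := congrArg Fin.val h3
        omega
      · have hc2 : (P.1 (2 : Fin 3) : ℕ) = 0 := c2_zero P
        have h1' : n - (P.1 (2 : Fin 3) : ℕ) ≤ (y2 : ℕ) := h1
        have hy2 := y2.isLt
        omega
    rw [hset, Set.ncard_empty]

lemma dinv_val (hn : 0 < n) (h3 : ¬ (3 ∣ n)) (P : DyckPath 3 n) :
    P.dinv = (P.1 1 : ℕ) + min ((P.1 0 : ℕ) - (P.1 1 : ℕ)) (n / 3 + 1)
      + ((P.1 0 : ℕ) - max ((P.1 0 : ℕ) - (P.1 1 : ℕ)) (n / 3)) := by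
  classical
  have hb0 := c0_bound P
  have hb1 := c1_bound P
  have h01 := c1_le_c0 P
  have hc0n := c0_le P
  have hc2 : (P.1 (2 : Fin 3) : ℕ) = 0 := c2_zero P
  have h3' : n % 3 ≠ 0 := fun h => h3 (Nat.dvd_of_mod_eq_zero h)
  have h0 : {j : Fin n | (0, j) ∈ P.cellsAbove
        ∧ dinvCond 3 n (P.arm (0, j)) (P.leg (0, j))}.ncard
      = min ((P.1 0 : ℕ) - (P.1 1 : ℕ)) (n / 3 + 1)
        + ((P.1 0 : ℕ) - max ((P.1 0 : ℕ) - (P.1 1 : ℕ)) (n / 3)) := by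
    rw [ncard_eq_card
      (fun t => (n - (P.1 0 : ℕ) ≤ t
          ∧ t < n - (P.1 0 : ℕ) + min ((P.1 0 : ℕ) - (P.1 1 : ℕ)) (n / 3 + 1))
        ∨ (n - (P.1 0 : ℕ) + max ((P.1 0 : ℕ) - (P.1 1 : ℕ)) (n / 3) ≤ t))
      (fun j => by
        have hj := j.isLt
        simp only [Set.mem_setOf_eq, DyckPath.cellsAbove, arm_zero, leg_eq, dinvCond_iff hn]
        split_ifs with hcc <;> omega)
      (Finset.Ico (n - (P.1 0 : ℕ))
          (n - (P.1 0 : ℕ) + min ((P.1 0 : ℕ) - (P.1 1 : ℕ)) (n / 3 + 1))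
        ∪ Finset.Ico (n - (P.1 0 : ℕ) + max ((P.1 0 : ℕ) - (P.1 1 : ℕ)) (n / 3)) n)
      (fun t => by simp only [mem_union, mem_Ico]; omega)]
    rw [Finset.card_union_of_disjoint (by
        rw [Finset.disjoint_left]
        intro t ht ht'
        simp only [mem_Ico] at ht ht'
        omega),
      Nat.card_Ico, Nat.card_Ico]
    omega
  have h1 : {j : Fin n | (1, j) ∈ P.cellsAbove
        ∧ dinvCond 3 n (P.arm (1, j)) (P.leg (1, j))}.ncard = (P.1 1 : ℕ) := by
    rw [ncard_eq_card (fun t => n - (P.1 1 : ℕ) ≤ t)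
      (fun j => by
        have hj := j.isLt
        simp only [Set.mem_setOf_eq, DyckPath.cellsAbove, arm_one, leg_eq, dinvCond_iff hn]
        omega)
      (Finset.Ico (n - (P.1 1 : ℕ)) n)
      (fun t => by simp only [mem_Ico]; omega), Nat.card_Ico]
    omega
  have h2 : {j : Fin n | (2, j) ∈ P.cellsAbove
        ∧ dinvCond 3 n (P.arm (2, j)) (P.leg (2, j))}.ncard = 0 := by
    have hset : {j : Fin n | (2, j) ∈ P.cellsAbove
        ∧ dinvCond 3 n (P.arm (2, j)) (P.leg (2, j))} = ∅ := by
      ext j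
      simp only [Set.mem_setOf_eq, Set.mem_empty_iff_false, iff_false, not_and]
      intro hm
      exfalso
      have hm' : n - (P.1 (2 : Fin 3) : ℕ) ≤ (j : ℕ) := hm
      have hj := j.isLt
      omega
    rw [hset, Set.ncard_empty]
  unfold DyckPath.dinv
  rw [ncard_prod]
  simp only [h0, h1, h2]
  omega

lemma area_val (hn : 0 < n) (h3 : ¬ (3 ∣ n)) (P : DyckPath 3 n) :
    P.area = n - 1 - ((P.1 0 : ℕ) + (P.1 1 : ℕ)) := by
  classical
  have hb0 := c0_bound P
  have hb1 := c1_bound P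
  have h01 := c1_le_c0 P
  have hc0n := c0_le P
  have hc2 : (P.1 (2 : Fin 3) : ℕ) = 0 := c2_zero P
  have h3' : n % 3 ≠ 0 := fun h => h3 (Nat.dvd_of_mod_eq_zero h)
  have h0 : {j : Fin n | n * (((0 : Fin 3) : ℕ) + 1) ≤ 3 * (j : ℕ)
        ∧ (0, j) ∉ P.cellsAbove}.ncard = n - (P.1 0 : ℕ) - (n / 3 + 1) := by
    rw [ncard_eq_card (fun t => n ≤ 3 * t ∧ t < n - (P.1 0 : ℕ))
      (fun j => by
        have hj := j.isLt
        simp only [Set.mem_setOf_eq, DyckPath.cellsAbove, Fin.val_zero]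
        omega)
      (Finset.Ico (n / 3 + 1) (n - (P.1 0 : ℕ)))
      (fun t => by simp only [mem_Ico]; omega), Nat.card_Ico]
  have h1 : {j : Fin n | n * (((1 : Fin 3) : ℕ) + 1) ≤ 3 * (j : ℕ)
        ∧ (1, j) ∉ P.cellsAbove}.ncard = n / 3 - (P.1 1 : ℕ) := by
    rw [ncard_eq_card (fun t => n * 2 ≤ 3 * t ∧ t < n - (P.1 1 : ℕ))
      (fun j => by
        have hj := j.isLt
        simp only [Set.mem_setOf_eq, DyckPath.cellsAbove, Fin.val_one]
        omega)
      (Finset.Ico (n - n / 3) (n - (P.1 1 : ℕ)))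
      (fun t => by simp only [mem_Ico]; omega), Nat.card_Ico]
    omega
  have h2 : {j : Fin n | n * (((2 : Fin 3) : ℕ) + 1) ≤ 3 * (j : ℕ)
        ∧ (2, j) ∉ P.cellsAbove}.ncard = 0 := by
    have hset : {j : Fin n | n * (((2 : Fin 3) : ℕ) + 1) ≤ 3 * (j : ℕ)
        ∧ (2, j) ∉ P.cellsAbove} = ∅ := by
      ext j
      simp only [Set.mem_setOf_eq, Set.mem_empty_iff_false, iff_false, not_and, Fin.val_two]
      intro hm
      have hj := j.isLt
      exfalso
      omega
    rw [hset, Set.ncard_empty]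
  unfold DyckPath.area
  rw [ncard_prod]
  simp only [h0, h1, h2]
  omega

def mkPath (n a b : ℕ) (ha : 3 * a ≤ 2 * n) (hb : b ≤ a) (hb2 : 3 * b ≤ n) : DyckPath 3 n :=
  ⟨fun i => if i.val = 0 then ⟨a, by omega⟩ else if i.val = 1 then ⟨b, by omega⟩
      else ⟨0, by omega⟩,
    by
      constructor
      · intro i j hij
        fin_cases i <;> fin_cases j <;> simp_all [Fin.le_def] <;> omega
      · intro i
        fin_cases i <;> simp <;> omega⟩

lemma ratCatalan_eq_pairs (hn : 0 < n) (h3 : ¬ (3 ∣ n)) :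
    ratCatalan 3 n =
      ∑ p ∈ (Finset.range (n+1) ×ˢ Finset.range (n+1)).filter
          (fun p : ℕ × ℕ => p.2 ≤ p.1 ∧ 3 * p.2 ≤ n ∧ 3 * p.1 ≤ 2 * n),
        X 0 ^ (p.2 + min (p.1 - p.2) (n / 3 + 1) + (p.1 - max (p.1 - p.2) (n / 3)))
          * X 1 ^ (n - 1 - (p.1 + p.2)) := by
  unfold ratCatalan
  refine Finset.sum_bij'
    (fun (P : DyckPath 3 n) (_ : P ∈ Finset.univ) => ((P.1 0 : ℕ), (P.1 1 : ℕ)))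
    (fun p hp => mkPath n p.1 p.2
      (by simp only [Finset.mem_filter] at hp; exact hp.2.2.2)
      (by simp only [Finset.mem_filter] at hp; exact hp.2.1)
      (by simp only [Finset.mem_filter] at hp; exact hp.2.2.1)) ?_ ?_ ?_ ?_ ?_
  · intro P _
    simp only [Finset.mem_filter, Finset.mem_product, Finset.mem_range]
    have h1 := c0_le P
    have h2 := c1_le_c0 P
    have h3 := c1_bound P
    have h4 := c0_bound P
    refine ⟨⟨by omega, by omega⟩, h2, h3, h4⟩
  · intro p hp
    exact Finset.mem_univ _
  · intro P _
    apply Subtype.ext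
    funext i
    fin_cases i
    · apply Fin.ext; simp [mkPath]
    · apply Fin.ext; simp [mkPath]
    · apply Fin.ext
      simp only [mkPath]
      norm_num
      exact (c2_zero P).symm
  · intro p hp
    apply Prod.ext <;> simp [mkPath]
  · intro P _
    rw [dinv_val hn h3 P, area_val hn h3 P]

lemma pairs_eq_sigma (hn : 0 < n) (h3 : ¬ (3 ∣ n)) :
    (∑ p ∈ (Finset.range (n+1) ×ˢ Finset.range (n+1)).filter
          (fun p : ℕ × ℕ => p.2 ≤ p.1 ∧ 3 * p.2 ≤ n ∧ 3 * p.1 ≤ 2 * n),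
        (X 0 ^ (p.2 + min (p.1 - p.2) (n / 3 + 1) + (p.1 - max (p.1 - p.2) (n / 3)))
          * X 1 ^ (n - 1 - (p.1 + p.2)) : MvPolynomial (Fin 2) ℤ))
      = ∑ x ∈ (Finset.range (n / 3 + 1)).sigma (fun s => Finset.Icc s (n - 2 * s - 1)),
          X 0 ^ (n - x.2 - x.1 - 1) * X 1 ^ x.2 := by
  have h3' : n % 3 ≠ 0 := fun h => h3 (Nat.dvd_of_mod_eq_zero h)
  refine Finset.sum_nbij'
    (fun p : ℕ × ℕ => (⟨p.1 + p.2 - (p.2 + min (p.1 - p.2) (n / 3 + 1)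
        + (p.1 - max (p.1 - p.2) (n / 3))), n - 1 - (p.1 + p.2)⟩ : (_ : ℕ) × ℕ))
    (fun x => if n - 1 - x.2 - x.1 ≤ n / 3 then (n - 1 - x.2 - x.1, x.1)
      else if (n - 1 - x.2 - x.1 - n / 3) % 2 = 0 then
        ((n - 1 - x.2 - x.1 + n / 3) / 2, x.1 + (n - 1 - x.2 - x.1 - n / 3) / 2)
      else (x.1 + (n - 1 - x.2 - x.1 + n / 3 + 1) / 2, (n - 1 - x.2 - x.1 - n / 3 - 1) / 2))
    ?_ ?_ ?_ ?_ ?_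
  · intro p hp
    simp only [Finset.mem_filter, Finset.mem_product, Finset.mem_range] at hp
    simp only [Finset.mem_sigma, Finset.mem_range, Finset.mem_Icc]
    omega
  · intro x hx
    simp only [Finset.mem_sigma, Finset.mem_range, Finset.mem_Icc] at hx
    split_ifs <;>
      simp only [Finset.mem_filter, Finset.mem_product, Finset.mem_range] <;> omega
  · intro p hp
    simp only [Finset.mem_filter, Finset.mem_product, Finset.mem_range] at hp
    obtain ⟨p1, p2⟩ := p
    dsimp only at hp ⊢
    split_ifs <;> simp only [Prod.mk.injEq] <;> omega
  · intro x hx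
    simp only [Finset.mem_sigma, Finset.mem_range, Finset.mem_Icc] at hx
    obtain ⟨s, a⟩ := x
    dsimp only at hx ⊢
    split_ifs <;> dsimp only <;> simp only [Sigma.mk.inj_iff, heq_eq_eq] <;> omega
  · intro p hp
    simp only [Finset.mem_filter, Finset.mem_product, Finset.mem_range] at hp
    dsimp only
    congr 2 <;> omega

end RatCat3

open Finset in
/-- For every positive integer `n` not divisible by 3,
`C_{3,n}(q,t) = Σ_{s=0}^{⌊n/3⌋} Σ_{a=s}^{n-2s-1} q^{n-a-s-1} t^a`, and equivalently
`C_{3,n}(q,t) = Σ_{s=0}^{⌊n/3⌋} Σ_{(a,d) : a ≥ s, d ≥ s, a+s+d+1=n} q^d t^a`. -/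
theorem ratCatalan_three_formula (n : ℕ) (hn : 0 < n) (h3 : ¬ (3 ∣ n)) :
    (ratCatalan 3 n =
      ∑ s ∈ Finset.range (n / 3 + 1), ∑ a ∈ Finset.Icc s (n - 2 * s - 1),
        X 0 ^ (n - a - s - 1) * X 1 ^ a) ∧
    ratCatalan 3 n =
      ∑ s ∈ Finset.range (n / 3 + 1),
        ∑ p ∈ (Finset.range n ×ˢ Finset.range n).filter
          (fun p : ℕ × ℕ => s ≤ p.1 ∧ s ≤ p.2 ∧ p.1 + s + p.2 + 1 = n),
          X 0 ^ p.2 * X 1 ^ p.1 := by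
  have key1 : ratCatalan 3 n =
      ∑ s ∈ Finset.range (n / 3 + 1), ∑ a ∈ Finset.Icc s (n - 2 * s - 1),
        (X 0 ^ (n - a - s - 1) * X 1 ^ a : MvPolynomial (Fin 2) ℤ) := by
    rw [RatCat3.ratCatalan_eq_pairs hn h3, RatCat3.pairs_eq_sigma hn h3,
      Finset.sum_sigma (Finset.range (n / 3 + 1)) (fun s => Finset.Icc s (n - 2 * s - 1))
        (fun x => (X 0 ^ (n - x.2 - x.1 - 1) * X 1 ^ x.2 : MvPolynomial (Fin 2) ℤ))]
  refine ⟨key1, ?_⟩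
  rw [key1]
  refine Finset.sum_congr rfl (fun s hs => ?_)
  simp only [Finset.mem_range] at hs
  refine Finset.sum_nbij' (fun a => (a, n - a - s - 1)) (fun p => p.1) ?_ ?_ ?_ ?_ ?_
  · intro a ha
    simp only [Finset.mem_Icc] at ha
    simp only [Finset.mem_filter, Finset.mem_product, Finset.mem_range]
    omega
  · intro p hp
    simp only [Finset.mem_filter, Finset.mem_product, Finset.mem_range] at hp
    simp only [Finset.mem_Icc]
    omega
  · intro a _
    rfl
  · intro p hp
    simp only [Finset.mem_filter, Finset.mem_product, Finset.mem_range] at hp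
    obtain ⟨p1, p2⟩ := p
    simp only [Prod.mk.injEq]
    exact ⟨trivial, by omega⟩
  · intro a _
    rfl
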